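/- For every positive integer cc there exists a finite simple graph G with an edge clique cover of size cc and exactly cc(cc+1)/2 vertices such that G has at least 2^{cc−1} − 1 minimal separators and at least S(cc,3) potential maximal cliques, where S(cc,3) is the number of partitions of a cc-element set into exactly three nonempty parts. -/

import Mathlib

open scoped Classical

namespace PaperECC

variable {V : Type*}

/-- `nbhd G X` is N(X): vertices outside `X` with a neighbor in `X`. -/
def nbhd (G : SimpleGraph V) (X : Set V) : Set V :=
  {v | v ∉ X ∧ ∃ u ∈ X, G.Adj u v}

/-- `closedNbhd G X` is N[X] = X ∪ N(X). -/
def closedNbhd (G : SimpleGraph V) (X : Set V) : Set V :=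
  X ∪ nbhd G X

/-- closed neighborhood N[v] of a single vertex. -/
def vNbhd (G : SimpleGraph V) (v : V) : Set V :=
  insert v (G.neighborSet v)

/-- `IsCompOf G X C`: `C` is the vertex set of a connected component of `G \ X`. -/
def IsCompOf (G : SimpleGraph V) (X C : Set V) : Prop :=
  C.Nonempty ∧ Disjoint C X ∧ (G.induce C).Connected ∧
    ∀ u ∈ C, ∀ v, v ∉ X → G.Adj u v → v ∈ C

/-- `C` is a full component of `X`: a component of `G \ X` with N(C) = X. -/
def IsFullCompOf (G : SimpleGraph V) (X C : Set V) : Prop :=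
  IsCompOf G X C ∧ nbhd G C = X

/-- `S` is a minimal separator of `G`: it has at least two full components. -/
def IsMinSep (G : SimpleGraph V) (S : Set V) : Prop :=
  ∃ C D : Set V, C ≠ D ∧ IsFullCompOf G S C ∧ IsFullCompOf G S D

/-- `C` is a block of `G`: a component of `G \ N(C)` whose neighborhood is a minimal separator. -/
def IsBlock (G : SimpleGraph V) (C : Set V) : Prop :=
  IsCompOf G (nbhd G C) C ∧ IsMinSep G (nbhd G C)

/-- `H` is chordal: every (injectively embedded) cycle on at least 4 vertices has a chord,
i.e. there is no induced cycle on four or more vertices. -/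
def IsChordal (H : SimpleGraph V) : Prop :=
  ∀ n : ℕ, 4 ≤ n → ∀ f : ZMod n → V, Function.Injective f →
    (∀ i, H.Adj (f i) (f (i + 1))) →
    ∃ i j : ZMod n, i ≠ j ∧ j ≠ i + 1 ∧ i ≠ j + 1 ∧ H.Adj (f i) (f j)

/-- `H` is a triangulation of `G` (on the same vertex set). -/
def IsTri (G H : SimpleGraph V) : Prop :=
  IsChordal H ∧ G ≤ H

/-- `H` is a minimal triangulation of `G`. -/
def IsMinTri (G H : SimpleGraph V) : Prop :=
  IsTri G H ∧ ∀ H' : SimpleGraph V, IsTri G H' → H' ≤ H → H' = H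

/-- `Ω` is a maximal clique of `H`. -/
def IsMaxClique (H : SimpleGraph V) (Ω : Set V) : Prop :=
  H.IsClique Ω ∧ ∀ Ω' : Set V, H.IsClique Ω' → Ω ⊆ Ω' → Ω' = Ω

/-- `Ω` is a potential maximal clique of `G`: a maximal clique of some minimal triangulation. -/
def IsPMC (G : SimpleGraph V) (Ω : Set V) : Prop :=
  ∃ H : SimpleGraph V, IsMinTri G H ∧ IsMaxClique H Ω

/-- `W` is an edge clique cover of `G`: a finite collection of cliques covering all edges. -/
def IsECC (G : SimpleGraph V) (W : Finset (Set V)) : Prop :=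
  (∀ K ∈ W, G.IsClique K) ∧ ∀ u v : V, G.Adj u v → ∃ K ∈ W, u ∈ K ∧ v ∈ K

/-- `W[X]`: the cliques of `W` intersecting the vertex set `X`. -/
noncomputable def meeting (W : Finset (Set V)) (X : Set V) : Finset (Set V) :=
  W.filter (fun K => (K ∩ X).Nonempty)

/-- `V(G, W')`: the vertices all of whose cliques (within `W`) belong to `W'`. -/
def partVerts (W W' : Finset (Set V)) : Set V :=
  {v | ∀ K ∈ W, v ∈ K → K ∈ W'}

/-- The connected components of the subgraph of `G` induced on a vertex set `Y`. -/
def compsOf (G : SimpleGraph V) (Y : Set V) : Set (Set V) :=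
  {C | IsCompOf G Yᶜ C}

/-- `C(W')`: the components of the part `W'` of the edge clique cover `W`. -/
def partComps (G : SimpleGraph V) (W W' : Finset (Set V)) : Set (Set V) :=
  compsOf G (partVerts W W')

/-- `W'` is a good part of `W`: a nonempty subset all of whose components are blocks of `G`. -/
def IsGoodPart (G : SimpleGraph V) (W W' : Finset (Set V)) : Prop :=
  W' ⊆ W ∧ W'.Nonempty ∧ ∀ C ∈ partComps G W W', IsBlock G C

/-- The realization `R(C)` of a block `C`, as a graph supported on `N[C]`:
edges of `G[N[C]]` together with all pairs inside `N(C)`. -/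
def realization (G : SimpleGraph V) (C : Set V) : SimpleGraph V where
  Adj u v := u ≠ v ∧ u ∈ closedNbhd G C ∧ v ∈ closedNbhd G C ∧
    (G.Adj u v ∨ (u ∈ nbhd G C ∧ v ∈ nbhd G C))
  symm := by
    refine ⟨?_⟩
    intro u v h
    exact ⟨h.1.symm, h.2.2.1, h.2.1, h.2.2.2.elim (fun a => Or.inl a.symm)
      (fun a => Or.inr ⟨a.2, a.1⟩)⟩
  loopless := ⟨fun u h => h.1 rfl⟩

/-- The complete graph on the vertex set `Ω` (supported on `Ω`): all pairs inside `Ω`. -/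
def cliqueOn (Ω : Set V) : SimpleGraph V where
  Adj u v := u ≠ v ∧ u ∈ Ω ∧ v ∈ Ω
  symm := ⟨fun u v h => ⟨h.1.symm, h.2.2, h.2.1⟩⟩
  loopless := ⟨fun u h => h.1 rfl⟩

/-- The induced subgraph `G[A]`, as a graph supported on `A`. -/
def inducedOn (G : SimpleGraph V) (A : Set V) : SimpleGraph V where
  Adj u v := G.Adj u v ∧ u ∈ A ∧ v ∈ A
  symm := ⟨fun u v h => ⟨h.1.symm, h.2.2, h.2.1⟩⟩
  loopless := ⟨fun u h => G.loopless.irrefl u h.1⟩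

/-- All edges of `H` lie inside the vertex set `A` (i.e. `H` has vertex set `A`). -/
def edgesWithin (H : SimpleGraph V) (A : Set V) : Prop :=
  ∀ u v : V, H.Adj u v → u ∈ A ∧ v ∈ A

/-- `H` is a triangulation of the graph `G'` with vertex set `A`. -/
def IsTriOn (G' : SimpleGraph V) (A : Set V) (H : SimpleGraph V) : Prop :=
  IsChordal H ∧ G' ≤ H ∧ edgesWithin H A

/-- `H` is a minimal triangulation of the graph `G'` with vertex set `A`. -/
def IsMinTriOn (G' : SimpleGraph V) (A : Set V) (H : SimpleGraph V) : Prop :=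
  IsTriOn G' A H ∧ ∀ H' : SimpleGraph V, IsTriOn G' A H' → H' ≤ H → H' = H

/-- `M` is a module of `G`. -/
def IsModule (G : SimpleGraph V) (M : Set V) : Prop :=
  ∀ v ∉ M, (∀ u ∈ M, G.Adj v u) ∨ (∀ u ∈ M, ¬ G.Adj v u)

/-! ### Auxiliary development for the tightness example -/

section Aux

lemma sym2_rep {α : Type*} (z : Sym2 α) : ∃ a b, z = s(a, b) := by
  induction z using Sym2.ind with | _ a b => exact ⟨a, b, rfl⟩

lemma zmod_ne (n a b : ℕ) (hn : 1 ≤ n) (ha : a < n) (hb : b < n) (hne : a ≠ b) :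
    (a : ZMod n) ≠ (b : ZMod n) := by
  haveI : NeZero n := ⟨by omega⟩
  intro h; apply hne
  have := congrArg ZMod.val h
  rwa [ZMod.val_natCast_of_lt ha, ZMod.val_natCast_of_lt hb] at this

lemma exists_minTri_le {V : Type*} [Finite V] (G T : SimpleGraph V) (hT : IsTri G T) :
    ∃ H, IsMinTri G H ∧ H ≤ T := by
  haveI : Finite (SimpleGraph V) :=
    Finite.of_injective (fun H => H.Adj) (fun _ _ h => SimpleGraph.ext h)
  obtain ⟨H, ⟨hHtri, hHle⟩, hmin⟩ := Set.Finite.exists_minimal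
    (s := {H | IsTri G H ∧ H ≤ T}) (Set.toFinite _) ⟨T, hT, le_rfl⟩
  exact ⟨H, ⟨hHtri, fun H' hH' hle => le_antisymm hle (hmin ⟨hH', hle.trans hHle⟩ hle)⟩, hHle⟩

lemma induce_connected_aux {V : Type*} (G : SimpleGraph V) (Cs : Set V) (hne : Cs.Nonempty)
    (h : ∀ u ∈ Cs, ∀ v ∈ Cs, ∃ w ∈ Cs, (u = w ∨ G.Adj u w) ∧ (w = v ∨ G.Adj w v)) :
    (G.induce Cs).Connected := by
  rw [SimpleGraph.connected_iff]
  constructor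
  · rintro ⟨u, hu⟩ ⟨v, hv⟩
    obtain ⟨w, hw, h1, h2⟩ := h u hu v hv
    have r1 : (G.induce Cs).Reachable ⟨u, hu⟩ ⟨w, hw⟩ := by
      rcases h1 with rfl | hadj
      · rfl
      · exact (SimpleGraph.Adj.reachable (by exact hadj))
    have r2 : (G.induce Cs).Reachable ⟨w, hw⟩ ⟨v, hv⟩ := by
      rcases h2 with rfl | hadj
      · rfl
      · exact (SimpleGraph.Adj.reachable (by exact hadj))
    exact r1.trans r2
  · exact ⟨⟨hne.choose, hne.choose_spec⟩⟩

lemma zmod4_cases (i : ZMod 4) : i = 0 ∨ i = 1 ∨ i = 2 ∨ i = 3 := by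
  revert i; decide

/-- the C4 lemma: in a chordal graph, a 4-cycle `u w1 v w2` with missing diagonal `w1 w2`
forces the diagonal `u v`. -/
lemma c4 {V : Type*} (H : SimpleGraph V) (hch : IsChordal H) {u v w1 w2 : V}
    (h1 : H.Adj u w1) (h2 : H.Adj w1 v) (h3 : H.Adj v w2) (h4 : H.Adj w2 u)
    (hw : w1 ≠ w2) (hnw : ¬H.Adj w1 w2) (huv : u ≠ v) : H.Adj u v := by
  by_contra hne
  set f : ZMod 4 → V := fun i => if i = 0 then u else if i = 1 then w1 else
    if i = 2 then v else w2 with hf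
  have f0 : f 0 = u := by simp [hf]
  have f1 : f 1 = w1 := by
    simp only [hf, show ((1:ZMod 4) = 0) = False from by simp; decide,
      show ((1:ZMod 4) = 1) = True from by simp, if_false, if_true]
  have f2 : f 2 = v := by
    simp only [hf, show ((2:ZMod 4) = 0) = False from by simp; decide,
      show ((2:ZMod 4) = 1) = False from by simp; decide,
      show ((2:ZMod 4) = 2) = True from by simp, if_false, if_true]
  have f3 : f 3 = w2 := by
    simp only [hf, show ((3:ZMod 4) = 0) = False from by simp; decide,
      show ((3:ZMod 4) = 1) = False from by simp; decide,
      show ((3:ZMod 4) = 2) = False from by simp; decide, if_false]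
  have hinj : Function.Injective f := by
    intro a b hab
    rcases zmod4_cases a with rfl | rfl | rfl | rfl <;>
      rcases zmod4_cases b with rfl | rfl | rfl | rfl <;>
      simp only [f0, f1, f2, f3] at hab <;>
      first
        | rfl
        | exact absurd hab h1.ne
        | exact absurd hab h1.ne.symm
        | exact absurd hab h2.ne
        | exact absurd hab h2.ne.symm
        | exact absurd hab h3.ne
        | exact absurd hab h3.ne.symm
        | exact absurd hab h4.ne
        | exact absurd hab h4.ne.symm
        | exact absurd hab huv
        | exact absurd hab huv.symm
        | exact absurd hab hw
        | exact absurd hab hw.symm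
  have hcons : ∀ i, H.Adj (f i) (f (i + 1)) := by
    intro i
    rcases zmod4_cases i with rfl | rfl | rfl | rfl
    · rw [show (0 : ZMod 4) + 1 = 1 by decide, f0, f1]; exact h1
    · rw [show (1 : ZMod 4) + 1 = 2 by decide, f1, f2]; exact h2
    · rw [show (2 : ZMod 4) + 1 = 3 by decide, f2, f3]; exact h3
    · rw [show (3 : ZMod 4) + 1 = 0 by decide, f3, f0]; exact h4
  obtain ⟨i, j, hij, hji1, hij1, hadj⟩ := hch 4 (le_refl 4) f hinj hcons
  rcases zmod4_cases i with rfl | rfl | rfl | rfl <;>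
    rcases zmod4_cases j with rfl | rfl | rfl | rfl <;>
    simp only [f0, f1, f2, f3] at hadj <;>
    first
      | exact hij rfl
      | exact hji1 (by decide)
      | exact hij1 (by decide)
      | exact hne hadj
      | exact hne hadj.symm
      | exact hnw hadj
      | exact hnw hadj.symm

end Aux

section Construction

variable (cc : ℕ) (e : Fin (cc * (cc + 1) / 2) ≃ Sym2 (Fin cc))

/-- The graph on unordered pairs (with repetition) from `Fin cc`, adjacent iff they share an
element. -/
def gr : SimpleGraph (Fin (cc * (cc + 1) / 2)) where
  Adj x y := x ≠ y ∧ ∃ a, a ∈ e x ∧ a ∈ e y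
  symm := ⟨by rintro x y ⟨h, a, h1, h2⟩; exact ⟨h.symm, a, h2, h1⟩⟩
  loopless := ⟨by rintro x ⟨h, -⟩; exact h rfl⟩

/-- The vertex corresponding to the pair `{a, a}`. -/
def vx (a : Fin cc) : Fin (cc * (cc + 1) / 2) := e.symm s(a, a)

lemma e_vx (a : Fin cc) : e (vx cc e a) = s(a, a) := e.apply_symm_apply _

lemma mem_e_vx (t a : Fin cc) (h : t ∈ e (vx cc e a)) : t = a := by
  rw [e_vx] at h
  rcases Sym2.mem_iff.mp h with rfl | rfl <;> rfl

/-- vertices all of whose elements lie in `p`. -/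
def SideS (p : Finset (Fin cc)) : Set (Fin (cc * (cc + 1) / 2)) := {x | ∀ t ∈ e x, t ∈ p}

/-- vertices having an element in `p`. -/
def BlobS (p : Finset (Fin cc)) : Set (Fin (cc * (cc + 1) / 2)) := {x | ∃ t ∈ e x, t ∈ p}

/-- vertices crossing `p` : one element inside, one outside. -/
def SepS (p : Finset (Fin cc)) : Set (Fin (cc * (cc + 1) / 2)) :=
  {x | (∃ s ∈ e x, s ∈ p) ∧ ∃ t ∈ e x, t ∉ p}

lemma vx_mem_side {a : Fin cc} {p : Finset (Fin cc)} (ha : a ∈ p) :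
    vx cc e a ∈ SideS cc e p := fun t ht => (mem_e_vx cc e t a ht) ▸ ha

lemma fullcomp (A : Finset (Fin cc)) (hA : A.Nonempty) :
    IsFullCompOf (gr cc e) (SepS cc e A) (SideS cc e A) := by
  obtain ⟨a0, ha0⟩ := hA
  refine ⟨⟨⟨vx cc e a0, vx_mem_side cc e ha0⟩, ?_, ?_, ?_⟩, ?_⟩
  · -- disjointness
    rw [Set.disjoint_left]
    rintro x hx ⟨-, t, ht, htn⟩
    exact htn (hx t ht)
  · -- connectivity
    refine induce_connected_aux _ _ ⟨vx cc e a0, vx_mem_side cc e ha0⟩ ?_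
    intro u hu v hv
    obtain ⟨a, b, hab⟩ := sym2_rep (e u)
    obtain ⟨c, d, hcd⟩ := sym2_rep (e v)
    have haA : a ∈ A := hu a (by rw [hab]; exact Sym2.mem_iff.mpr (Or.inl rfl))
    have hcA : c ∈ A := hv c (by rw [hcd]; exact Sym2.mem_iff.mpr (Or.inl rfl))
    refine ⟨e.symm s(a, c), ?_, ?_, ?_⟩
    · intro t ht
      rw [e.apply_symm_apply] at ht
      rcases Sym2.mem_iff.mp ht with rfl | rfl
      exacts [haA, hcA]
    · by_cases h : u = e.symm s(a, c)
      · exact Or.inl h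
      · exact Or.inr ⟨h, a, by rw [hab]; exact Sym2.mem_iff.mpr (Or.inl rfl),
          by rw [e.apply_symm_apply]; exact Sym2.mem_iff.mpr (Or.inl rfl)⟩
    · by_cases h : e.symm s(a, c) = v
      · exact Or.inl h
      · exact Or.inr ⟨h, c, by rw [e.apply_symm_apply]; exact Sym2.mem_iff.mpr (Or.inr rfl),
          by rw [hcd]; exact Sym2.mem_iff.mpr (Or.inl rfl)⟩
  · -- closedness
    rintro u hu v hv ⟨-, g, hgu, hgv⟩
    intro t ht
    by_contra htn
    exact hv ⟨⟨g, hgv, hu g hgu⟩, ⟨t, ht, htn⟩⟩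
  · -- nbhd = SepS
    ext v
    constructor
    · rintro ⟨hvn, u, hu, -, g, hgu, hgv⟩
      refine ⟨⟨g, hgv, hu g hgu⟩, ?_⟩
      simp only [SideS, Set.mem_setOf_eq] at hvn
      push_neg at hvn
      exact hvn
    · rintro ⟨⟨s, hs, hsA⟩, ⟨t, ht, htA⟩⟩
      refine ⟨fun h => htA (h t ht), vx cc e s, vx_mem_side cc e hsA, ?_, s, ?_, hs⟩
      · intro h
        rw [← h] at ht
        exact htA ((mem_e_vx cc e t s ht) ▸ hsA)
      · rw [e_vx]; exact Sym2.mem_iff.mpr (Or.inl rfl)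

lemma sep_compl (A : Finset (Fin cc)) : SepS cc e Aᶜ = SepS cc e A := by
  ext x
  simp only [SepS, Set.mem_setOf_eq, Finset.mem_compl, not_not]
  tauto

lemma isMinSep_sep (A : Finset (Fin cc)) (hA : A.Nonempty) (hA' : ∃ t, t ∉ A) :
    IsMinSep (gr cc e) (SepS cc e A) := by
  obtain ⟨a0, ha0⟩ := hA
  obtain ⟨b0, hb0⟩ := hA'
  refine ⟨SideS cc e A, SideS cc e Aᶜ, ?_, fullcomp cc e A ⟨a0, ha0⟩, ?_⟩
  · intro h
    have h1 : vx cc e a0 ∈ SideS cc e A := vx_mem_side cc e ha0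
    rw [h] at h1
    have := h1 a0 (by rw [e_vx]; exact Sym2.mem_iff.mpr (Or.inl rfl))
    rw [Finset.mem_compl] at this
    exact this ha0
  · rw [← sep_compl]
    exact fullcomp cc e Aᶜ ⟨b0, Finset.mem_compl.mpr hb0⟩

end Construction

section PMC

variable (cc : ℕ) (e : Fin (cc * (cc + 1) / 2) ≃ Sym2 (Fin cc))
variable (A B C : Finset (Fin cc))

/-- the part of the 3-partition `A, B, C` containing a given element. -/
def pt (x : Fin cc) : Finset (Fin cc) := if x ∈ A then A else if x ∈ B then B else C

/-- the crossing vertices of the 3-partition. -/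
def OmS : Set (Fin (cc * (cc + 1) / 2)) :=
  {x | ∃ s ∈ e x, ∃ t ∈ e x, pt cc A B C s ≠ pt cc A B C t}

/-- the chordal "witness" triangulation: complete the crossing set and each closed blob. -/
def TT : SimpleGraph (Fin (cc * (cc + 1) / 2)) where
  Adj u v := u ≠ v ∧ ((u ∈ OmS cc e A B C ∧ v ∈ OmS cc e A B C) ∨
    (u ∈ BlobS cc e A ∧ v ∈ BlobS cc e A) ∨ (u ∈ BlobS cc e B ∧ v ∈ BlobS cc e B) ∨
    (u ∈ BlobS cc e C ∧ v ∈ BlobS cc e C))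
  symm := ⟨by rintro u v ⟨h, hh⟩; exact ⟨h.symm, by tauto⟩⟩
  loopless := ⟨by rintro u ⟨h, -⟩; exact h rfl⟩

variable {cc e A B C}
variable (hAB : Disjoint A B) (hAC : Disjoint A C) (hBC : Disjoint B C)
variable (hcov : ∀ x, x ∈ A ∨ x ∈ B ∨ x ∈ C)

section PtLemmas
include hcov in
lemma mem_pt (x : Fin cc) : x ∈ pt cc A B C x := by
  unfold pt
  split_ifs with h1 h2
  · exact h1
  · exact h2
  · rcases hcov x with h | h | h
    · exact absurd h h1
    · exact absurd h h2
    · exact h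

lemma pt_cases (x : Fin cc) :
    pt cc A B C x = A ∨ pt cc A B C x = B ∨ pt cc A B C x = C := by
  unfold pt; split_ifs <;> tauto

lemma pt_eq_A {x : Fin cc} (h : x ∈ A) : pt cc A B C x = A := if_pos h

include hAB in
lemma pt_eq_B {x : Fin cc} (h : x ∈ B) : pt cc A B C x = B := by
  unfold pt
  rw [if_neg (Finset.disjoint_right.mp hAB h), if_pos h]

include hAC hBC in
lemma pt_eq_C {x : Fin cc} (h : x ∈ C) : pt cc A B C x = C := by
  unfold pt
  rw [if_neg (Finset.disjoint_right.mp hAC h), if_neg (Finset.disjoint_right.mp hBC h)]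

include hAB hAC hBC in
lemma pt_eq_pt_of_mem {s t : Fin cc} (h : t ∈ pt cc A B C s) :
    pt cc A B C t = pt cc A B C s := by
  rcases pt_cases (A := A) (B := B) (C := C) s with hs | hs | hs <;> rw [hs] at h ⊢
  · exact pt_eq_A h
  · exact pt_eq_B hAB h
  · exact pt_eq_C hAC hBC h
end PtLemmas

include hAB hAC hBC in
lemma side_not_om {x : Fin (cc * (cc + 1) / 2)} {p : Finset (Fin cc)}
    (hp : p = A ∨ p = B ∨ p = C) (hx : x ∈ SideS cc e p) : x ∉ OmS cc e A B C := by
  rintro ⟨s, hs, t, ht, hst⟩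
  apply hst
  have h1 : pt cc A B C s = p := by
    rcases hp with rfl | rfl | rfl
    · exact pt_eq_A (hx s hs)
    · exact pt_eq_B hAB (hx s hs)
    · exact pt_eq_C hAC hBC (hx s hs)
  have h2 : pt cc A B C t = p := by
    rcases hp with rfl | rfl | rfl
    · exact pt_eq_A (hx t ht)
    · exact pt_eq_B hAB (hx t ht)
    · exact pt_eq_C hAC hBC (hx t ht)
  rw [h1, h2]

include hAB hAC hBC hcov in
lemma not_om_side {x : Fin (cc * (cc + 1) / 2)} (hx : x ∉ OmS cc e A B C) :
    ∃ p, (p = A ∨ p = B ∨ p = C) ∧ x ∈ SideS cc e p := by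
  obtain ⟨a, b, hab⟩ := sym2_rep (e x)
  have hmema : a ∈ e x := by rw [hab]; exact Sym2.mem_iff.mpr (Or.inl rfl)
  have hall : ∀ s ∈ e x, ∀ t ∈ e x, pt cc A B C s = pt cc A B C t := by
    intro s hs t ht
    by_contra h
    exact hx ⟨s, hs, t, ht, h⟩
  refine ⟨pt cc A B C a, pt_cases a, ?_⟩
  intro t ht
  have := hall t ht a hmema
  rw [← this]
  exact mem_pt hcov t

include hAB hAC hBC in
lemma no_TT_edge {x y : Fin (cc * (cc + 1) / 2)} {p : Finset (Fin cc)}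
    (hp : p = A ∨ p = B ∨ p = C) (hx : x ∈ SideS cc e p) (hy : ∀ t ∈ e y, t ∉ p) :
    ¬(TT cc e A B C).Adj x y := by
  rintro ⟨hne, (⟨hxo, -⟩ | ⟨hx', hy'⟩ | ⟨hx', hy'⟩ | ⟨hx', hy'⟩)⟩
  · exact side_not_om hAB hAC hBC hp hx hxo
  · obtain ⟨t, ht, htm⟩ := hx'
    obtain ⟨s, hs, hsm⟩ := hy'
    have htp := hx t ht
    rcases hp with rfl | rfl | rfl
    · exact hy s hs hsm
    · exact Finset.disjoint_left.mp hAB htm htp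
    · exact Finset.disjoint_left.mp hAC htm htp
  · obtain ⟨t, ht, htm⟩ := hx'
    obtain ⟨s, hs, hsm⟩ := hy'
    have htp := hx t ht
    rcases hp with rfl | rfl | rfl
    · exact Finset.disjoint_left.mp hAB htp htm
    · exact hy s hs hsm
    · exact Finset.disjoint_left.mp hBC htm htp
  · obtain ⟨t, ht, htm⟩ := hx'
    obtain ⟨s, hs, hsm⟩ := hy'
    have htp := hx t ht
    rcases hp with rfl | rfl | rfl
    · exact Finset.disjoint_right.mp hAC htm htp
    · exact Finset.disjoint_right.mp hBC htm htp
    · exact hy s hs hsm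

include hcov in
lemma gr_le_TT : gr cc e ≤ TT cc e A B C := by
  rintro u v ⟨hne, a, hau, hav⟩
  refine ⟨hne, ?_⟩
  rcases hcov a with h | h | h
  · exact Or.inr (Or.inl ⟨⟨a, hau, h⟩, ⟨a, hav, h⟩⟩)
  · exact Or.inr (Or.inr (Or.inl ⟨⟨a, hau, h⟩, ⟨a, hav, h⟩⟩))
  · exact Or.inr (Or.inr (Or.inr ⟨⟨a, hau, h⟩, ⟨a, hav, h⟩⟩))

include hAB hAC hBC in
lemma nbr_in_blob {x w : Fin (cc * (cc + 1) / 2)} {p : Finset (Fin cc)}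
    (hp : p = A ∨ p = B ∨ p = C) (hx : x ∈ SideS cc e p)
    (hadj : (TT cc e A B C).Adj w x) : w ∈ BlobS cc e p := by
  obtain ⟨hne, h⟩ := hadj
  rcases h with ⟨hw, hxo⟩ | ⟨hw, hx'⟩ | ⟨hw, hx'⟩ | ⟨hw, hx'⟩
  · exact absurd hxo (side_not_om hAB hAC hBC hp hx)
  · obtain ⟨t, ht, htm⟩ := hx'
    have htp := hx t ht
    rcases hp with rfl | rfl | rfl
    · exact hw
    · exact absurd htp (Finset.disjoint_left.mp hAB htm)
    · exact absurd htp (Finset.disjoint_left.mp hAC htm)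
  · obtain ⟨t, ht, htm⟩ := hx'
    have htp := hx t ht
    rcases hp with rfl | rfl | rfl
    · exact absurd htm (Finset.disjoint_left.mp hAB htp)
    · exact hw
    · exact absurd htm (Finset.disjoint_right.mp hBC htp)
  · obtain ⟨t, ht, htm⟩ := hx'
    have htp := hx t ht
    rcases hp with rfl | rfl | rfl
    · exact absurd htm (Finset.disjoint_left.mp hAC htp)
    · exact absurd htm (Finset.disjoint_left.mp hBC htp)
    · exact hw

include hAB hAC hBC hcov in
lemma TT_chordal : IsChordal (TT cc e A B C) := by
  intro n hn f hinj hcons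
  have h2 : ((2 : ℕ) : ZMod n) ≠ ((0 : ℕ) : ZMod n) := zmod_ne n 2 0 (by omega) (by omega) (by omega) (by omega)
  have h3 : ((3 : ℕ) : ZMod n) ≠ ((0 : ℕ) : ZMod n) := zmod_ne n 3 0 (by omega) (by omega) (by omega) (by omega)
  have h1 : ((1 : ℕ) : ZMod n) ≠ ((0 : ℕ) : ZMod n) := zmod_ne n 1 0 (by omega) (by omega) (by omega) (by omega)
  have h2' : (2 : ZMod n) ≠ 0 := by exact_mod_cast h2
  have h3' : (3 : ZMod n) ≠ 0 := by exact_mod_cast h3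
  have h1' : (1 : ZMod n) ≠ 0 := by exact_mod_cast h1
  by_cases hall : ∀ i, f i ∈ OmS cc e A B C
  · refine ⟨0, 2, fun h => h2' h.symm, ?_, ?_, ?_⟩
    · intro h
      rw [zero_add] at h
      refine h1' ?_
      calc (1 : ZMod n) = 2 - 1 := by ring
        _ = 1 - 1 := by rw [h]
        _ = 0 := sub_self 1
    · intro h
      rw [show (2 : ZMod n) + 1 = 3 from by ring] at h
      exact h3' h.symm
    · exact ⟨hinj.ne (fun h => h2' h.symm), Or.inl ⟨hall 0, hall 2⟩⟩
  · push_neg at hall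
    obtain ⟨i, hi⟩ := hall
    obtain ⟨p, hp, hside⟩ := not_om_side hAB hAC hBC hcov hi
    have a1 : (TT cc e A B C).Adj (f (i - 1)) (f i) := by
      have := hcons (i - 1)
      rwa [sub_add_cancel] at this
    have a2 : (TT cc e A B C).Adj (f (i + 1)) (f i) := (hcons i).symm
    have hw1 : f (i + 1) ∈ BlobS cc e p := nbr_in_blob hAB hAC hBC hp hside a2
    have hw2 : f (i - 1) ∈ BlobS cc e p := nbr_in_blob hAB hAC hBC hp hside a1
    have hne2 : i + 1 ≠ i - 1 := by
      intro h
      refine h2' ?_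
      calc (2 : ZMod n) = (i + 1) - (i - 1) := by ring
        _ = (i - 1) - (i - 1) := by rw [h]
        _ = 0 := sub_self _
    refine ⟨i + 1, i - 1, hne2, ?_, ?_, hinj.ne hne2, ?_⟩
    · -- i - 1 ≠ (i + 1) + 1
      intro h
      have h' : i - 1 = i + 2 := by rw [h]; ring
      refine h3' ?_
      calc (3 : ZMod n) = (i + 2) - (i - 1) := by ring
        _ = (i + 2) - (i + 2) := by rw [h']
        _ = 0 := sub_self _
    · -- i + 1 ≠ (i - 1) + 1
      rw [sub_add_cancel]
      intro h
      refine h1' ?_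
      calc (1 : ZMod n) = (i + 1) - i := by ring
        _ = i - i := by rw [h]
        _ = 0 := sub_self i
    · rcases hp with rfl | rfl | rfl
      · exact Or.inr (Or.inl ⟨hw1, hw2⟩)
      · exact Or.inr (Or.inr (Or.inl ⟨hw1, hw2⟩))
      · exact Or.inr (Or.inr (Or.inr ⟨hw1, hw2⟩))

include hAB hAC hBC hcov in
lemma om_escape (hB : B.Nonempty) (hC : C.Nonempty) (hA : A.Nonempty)
    {x : Fin (cc * (cc + 1) / 2)} (hx : x ∉ OmS cc e A B C) :
    ∃ y ∈ OmS cc e A B C, x ≠ y ∧ ¬(TT cc e A B C).Adj x y := by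
  obtain ⟨p, hp, hside⟩ := not_om_side hAB hAC hBC hcov hx
  obtain ⟨y1, y2, hptne, hy1p, hy2p⟩ :
      ∃ y1 y2 : Fin cc, pt cc A B C y1 ≠ pt cc A B C y2 ∧ y1 ∉ p ∧ y2 ∉ p := by
    rcases hp with rfl | rfl | rfl
    · obtain ⟨b0, hb0⟩ := hB; obtain ⟨c0, hc0⟩ := hC
      refine ⟨b0, c0, ?_, ?_, ?_⟩
      · rw [pt_eq_B hAB hb0, pt_eq_C hAC hBC hc0]
        intro h
        have hb0' := hb0
        rw [h] at hb0'
        exact Finset.disjoint_left.mp hBC hb0 hb0'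
      · exact Finset.disjoint_right.mp hAB hb0
      · exact Finset.disjoint_right.mp hAC hc0
    · obtain ⟨b0, hb0⟩ := hA; obtain ⟨c0, hc0⟩ := hC
      refine ⟨b0, c0, ?_, ?_, ?_⟩
      · rw [pt_eq_A hb0, pt_eq_C hAC hBC hc0]
        intro h
        have hb0' := hb0
        rw [h] at hb0'
        exact Finset.disjoint_left.mp hAC hb0 hb0'
      · exact Finset.disjoint_left.mp hAB hb0
      · exact Finset.disjoint_right.mp hBC hc0
    · obtain ⟨b0, hb0⟩ := hA; obtain ⟨c0, hc0⟩ := hB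
      refine ⟨b0, c0, ?_, ?_, ?_⟩
      · rw [pt_eq_A hb0, pt_eq_B hAB hc0]
        intro h
        have hb0' := hb0
        rw [h] at hb0'
        exact Finset.disjoint_left.mp hAB hb0 hb0'
      · exact Finset.disjoint_left.mp hAC hb0
      · exact Finset.disjoint_left.mp hBC hc0
  set y : Fin (cc * (cc + 1) / 2) := e.symm s(y1, y2) with hy
  have hey : e y = s(y1, y2) := e.apply_symm_apply _
  have hy1m : y1 ∈ e y := by rw [hey]; exact Sym2.mem_iff.mpr (Or.inl rfl)
  have hy2m : y2 ∈ e y := by rw [hey]; exact Sym2.mem_iff.mpr (Or.inr rfl)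
  have hyom : y ∈ OmS cc e A B C := ⟨y1, hy1m, y2, hy2m, hptne⟩
  have hynp : ∀ t ∈ e y, t ∉ p := by
    intro t ht
    rw [hey] at ht
    rcases Sym2.mem_iff.mp ht with rfl | rfl
    exacts [hy1p, hy2p]
  refine ⟨y, hyom, ?_, no_TT_edge hAB hAC hBC hp hside hynp⟩
  intro h
  exact hynp y1 hy1m (hside y1 (h ▸ hy1m))

include hAB hAC hBC hcov in
lemma key_pair {u v : Fin (cc * (cc + 1) / 2)} {a b c d : Fin cc}
    (hu : e u = s(a, b)) (hv : e v = s(c, d))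
    (hab : pt cc A B C a ≠ pt cc A B C b) (hcd : pt cc A B C c ≠ pt cc A B C d)
    (hac : a ≠ c) (had : a ≠ d) (hbc : b ≠ c) (hbd : b ≠ d)
    (hpac : pt cc A B C a = pt cc A B C c) :
    ∃ w1 w2, (gr cc e).Adj u w1 ∧ (gr cc e).Adj w1 v ∧ (gr cc e).Adj u w2 ∧
      (gr cc e).Adj w2 v ∧ w1 ≠ w2 ∧ ¬(TT cc e A B C).Adj w1 w2 := by
  have hab' : a ≠ b := fun h => hab (by rw [h])
  have hcd' : c ≠ d := fun h => hcd (by rw [h])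
  set w1 : Fin (cc * (cc + 1) / 2) := e.symm s(a, c) with hw1
  set w2 : Fin (cc * (cc + 1) / 2) := e.symm s(b, d) with hw2
  have he1 : e w1 = s(a, c) := e.apply_symm_apply _
  have he2 : e w2 = s(b, d) := e.apply_symm_apply _
  have meml : ∀ (x y : Fin cc), x ∈ s(x, y) := fun x y => Sym2.mem_iff.mpr (Or.inl rfl)
  have memr : ∀ (x y : Fin cc), y ∈ s(x, y) := fun x y => Sym2.mem_iff.mpr (Or.inr rfl)
  refine ⟨w1, w2, ?_, ?_, ?_, ?_, ?_, ?_⟩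
  · refine ⟨?_, a, by rw [hu]; exact meml a b, by rw [he1]; exact meml a c⟩
    intro h
    have : s(a, b) = s(a, c) := by rw [← hu, ← he1, h]
    rcases Sym2.eq_iff.mp this with ⟨-, h2⟩ | ⟨h1, -⟩
    exacts [hbc h2, hac h1]
  · refine ⟨?_, c, by rw [he1]; exact memr a c, by rw [hv]; exact meml c d⟩
    intro h
    have : s(a, c) = s(c, d) := by rw [← he1, ← hv, h]
    rcases Sym2.eq_iff.mp this with ⟨h1, -⟩ | ⟨h1, h2⟩
    exacts [hac h1, had h1]
  · refine ⟨?_, b, by rw [hu]; exact memr a b, by rw [he2]; exact meml b d⟩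
    intro h
    have : s(a, b) = s(b, d) := by rw [← hu, ← he2, h]
    rcases Sym2.eq_iff.mp this with ⟨h1, h2⟩ | ⟨h1, h2⟩
    exacts [hbd h2, had h1]
  · refine ⟨?_, d, by rw [he2]; exact memr b d, by rw [hv]; exact memr c d⟩
    intro h
    have : s(b, d) = s(c, d) := by rw [← he2, ← hv, h]
    rcases Sym2.eq_iff.mp this with ⟨h1, -⟩ | ⟨-, h2⟩
    exacts [hbc h1, hcd' h2.symm]
  · intro h
    have : s(a, c) = s(b, d) := by rw [← he1, ← he2, h]
    rcases Sym2.eq_iff.mp this with ⟨h1, -⟩ | ⟨h1, -⟩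
    exacts [hab' h1, had h1]
  · -- w1 is inside the part of a ; w2 avoids it entirely
    have hside : w1 ∈ SideS cc e (pt cc A B C a) := by
      intro t ht
      rw [he1] at ht
      rcases Sym2.mem_iff.mp ht with rfl | rfl
      · exact mem_pt hcov _
      · rw [hpac]; exact mem_pt hcov _
    have hw2out : ∀ t ∈ e w2, t ∉ pt cc A B C a := by
      intro t ht htm
      rw [he2] at ht
      have : pt cc A B C t = pt cc A B C a := pt_eq_pt_of_mem hAB hAC hBC htm
      rcases Sym2.mem_iff.mp ht with rfl | rfl
      · exact hab this.symm
      · exact hcd (hpac.symm.trans this.symm)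
    exact no_TT_edge hAB hAC hBC (pt_cases a) hside hw2out

include hAB hAC hBC hcov in
lemma om_clique (H : SimpleGraph (Fin (cc * (cc + 1) / 2))) (hch : IsChordal H)
    (hGH : gr cc e ≤ H) (hHT : H ≤ TT cc e A B C) : H.IsClique (OmS cc e A B C) := by
  intro u hu v hv hne
  by_cases hG : (gr cc e).Adj u v
  · exact hGH hG
  obtain ⟨a, b, hu'⟩ := sym2_rep (e u)
  obtain ⟨c, d, hv'⟩ := sym2_rep (e v)
  have hmaU : a ∈ e u := by rw [hu']; exact Sym2.mem_iff.mpr (Or.inl rfl)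
  have hmbU : b ∈ e u := by rw [hu']; exact Sym2.mem_iff.mpr (Or.inr rfl)
  have hmcV : c ∈ e v := by rw [hv']; exact Sym2.mem_iff.mpr (Or.inl rfl)
  have hmdV : d ∈ e v := by rw [hv']; exact Sym2.mem_iff.mpr (Or.inr rfl)
  have hnocommon : ∀ t : Fin cc, t ∈ e u → t ∈ e v → False := by
    intro t h1 h2
    exact hG ⟨hne, t, h1, h2⟩
  have hac : a ≠ c := fun h => hnocommon a hmaU (h ▸ hmcV)
  have had : a ≠ d := fun h => hnocommon a hmaU (h ▸ hmdV)
  have hbc : b ≠ c := fun h => hnocommon b hmbU (h ▸ hmcV)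
  have hbd : b ≠ d := fun h => hnocommon b hmbU (h ▸ hmdV)
  have hab : pt cc A B C a ≠ pt cc A B C b := by
    intro h
    obtain ⟨s, hs, t, ht, hst⟩ := hu
    apply hst
    rw [hu'] at hs ht
    rcases Sym2.mem_iff.mp hs with rfl | rfl <;> rcases Sym2.mem_iff.mp ht with rfl | rfl <;>
      simp [h]
  have hcd : pt cc A B C c ≠ pt cc A B C d := by
    intro h
    obtain ⟨s, hs, t, ht, hst⟩ := hv
    apply hst
    rw [hv'] at hs ht
    rcases Sym2.mem_iff.mp hs with rfl | rfl <;> rcases Sym2.mem_iff.mp ht with rfl | rfl <;>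
      simp [h]
  have finish : ∀ w1 w2 : Fin (cc * (cc + 1) / 2),
      (gr cc e).Adj u w1 → (gr cc e).Adj w1 v → (gr cc e).Adj u w2 →
      (gr cc e).Adj w2 v → w1 ≠ w2 → ¬(TT cc e A B C).Adj w1 w2 → H.Adj u v := by
    intro w1 w2 k1 k2 k3 k4 k5 k6
    exact c4 H hch (hGH k1) (hGH k2) (hGH k4).symm (hGH k3).symm k5
      (fun h => k6 (hHT h)) hne
  by_cases h1 : pt cc A B C a = pt cc A B C c
  · obtain ⟨w1, w2, k1, k2, k3, k4, k5⟩ :=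
      key_pair hAB hAC hBC hcov hu' hv' hab hcd hac had hbc hbd h1
    exact finish w1 w2 k1 k2 k3 k4 k5.1 k5.2
  by_cases h2 : pt cc A B C a = pt cc A B C d
  · obtain ⟨w1, w2, k1, k2, k3, k4, k5⟩ :=
      key_pair hAB hAC hBC hcov hu' (hv'.trans Sym2.eq_swap) hab (Ne.symm hcd)
        had hac hbd hbc h2
    exact finish w1 w2 k1 k2 k3 k4 k5.1 k5.2
  by_cases h3 : pt cc A B C b = pt cc A B C c
  · obtain ⟨w1, w2, k1, k2, k3, k4, k5⟩ :=
      key_pair hAB hAC hBC hcov (hu'.trans Sym2.eq_swap) hv' (Ne.symm hab) hcd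
        hbc hbd hac had h3
    exact finish w1 w2 k1 k2 k3 k4 k5.1 k5.2
  by_cases h4 : pt cc A B C b = pt cc A B C d
  · obtain ⟨w1, w2, k1, k2, k3, k4, k5⟩ :=
      key_pair hAB hAC hBC hcov (hu'.trans Sym2.eq_swap) (hv'.trans Sym2.eq_swap)
        (Ne.symm hab) (Ne.symm hcd) hbd hbc had hac h4
    exact finish w1 w2 k1 k2 k3 k4 k5.1 k5.2
  · exfalso
    rcases pt_cases (A := A) (B := B) (C := C) a with ha | ha | ha <;>
      rcases pt_cases (A := A) (B := B) (C := C) b with hb | hb | hb <;>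
      rcases pt_cases (A := A) (B := B) (C := C) c with hc | hc | hc <;>
      rcases pt_cases (A := A) (B := B) (C := C) d with hd | hd | hd <;>
      first
        | exact h1 (ha.trans hc.symm)
        | exact h2 (ha.trans hd.symm)
        | exact h3 (hb.trans hc.symm)
        | exact h4 (hb.trans hd.symm)
        | exact hab (ha.trans hb.symm)
        | exact hcd (hc.trans hd.symm)

include hAB hAC hBC hcov in
lemma isPMC_om (hA : A.Nonempty) (hB : B.Nonempty) (hC : C.Nonempty) :
    IsPMC (gr cc e) (OmS cc e A B C) := by
  obtain ⟨H, hHmin, hHT⟩ := exists_minTri_le (gr cc e) (TT cc e A B C)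
    ⟨TT_chordal hAB hAC hBC hcov, gr_le_TT hcov⟩
  refine ⟨H, hHmin, ?_, ?_⟩
  · exact om_clique hAB hAC hBC hcov H hHmin.1.1 hHmin.1.2 hHT
  · intro Ω' hcl hsub
    refine Set.Subset.antisymm ?_ hsub
    intro w hw
    by_contra hwo
    obtain ⟨y, hy, hne, hnadj⟩ := om_escape hAB hAC hBC hcov hB hC hA hwo
    exact hnadj (hHT (hcl hw (hsub hy) hne))

end PMC

section Counting

variable (cc : ℕ) (e : Fin (cc * (cc + 1) / 2) ≃ Sym2 (Fin cc))

/-- the clique of all pairs containing `i`. -/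
def Kcl (i : Fin cc) : Set (Fin (cc * (cc + 1) / 2)) := {x | i ∈ e x}

noncomputable def Wecc : Finset (Set (Fin (cc * (cc + 1) / 2))) := Finset.univ.image (fun i => Kcl cc e i)

lemma Kcl_inj : Function.Injective (Kcl cc e) := by
  intro i j h
  by_contra hne
  have h1 : vx cc e i ∈ Kcl cc e i := by
    show i ∈ e (vx cc e i)
    rw [e_vx]
    exact Sym2.mem_iff.mpr (Or.inl rfl)
  rw [h] at h1
  exact hne (mem_e_vx cc e j i h1).symm

lemma ecc_gr : IsECC (gr cc e) (Wecc cc e) := by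
  constructor
  · intro K hK
    obtain ⟨i, -, rfl⟩ := Finset.mem_image.mp hK
    intro u hu v hv hne
    exact ⟨hne, i, hu, hv⟩
  · rintro u v ⟨hne, a, h1, h2⟩
    exact ⟨Kcl cc e a, Finset.mem_image_of_mem _ (Finset.mem_univ a), h1, h2⟩

lemma Wecc_card : (Wecc cc e).card = cc := by
  rw [Wecc, Finset.card_image_of_injective _ (Kcl_inj cc e), Finset.card_univ, Fintype.card_fin]

lemma sep_recover [NeZero cc] (A : Finset (Fin cc)) (h0 : (0 : Fin cc) ∈ A) (a : Fin cc) :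
    a ∈ A ↔ e.symm s((0 : Fin cc), a) ∉ SepS cc e A := by
  have he : e (e.symm s((0 : Fin cc), a)) = s((0 : Fin cc), a) := e.apply_symm_apply _
  constructor
  · rintro ha ⟨-, t, ht, htA⟩
    rw [he] at ht
    rcases Sym2.mem_iff.mp ht with rfl | rfl
    exacts [htA h0, htA ha]
  · intro h
    by_contra ha
    refine h ⟨⟨0, ?_, h0⟩, ⟨a, ?_, ha⟩⟩
    · rw [he]; exact Sym2.mem_iff.mpr (Or.inl rfl)
    · rw [he]; exact Sym2.mem_iff.mpr (Or.inr rfl)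

lemma minsep_count (hcc : 1 ≤ cc) :
    2 ^ (cc - 1) - 1 ≤ {S : Set (Fin (cc * (cc + 1) / 2)) | IsMinSep (gr cc e) S}.ncard := by
  haveI : NeZero cc := ⟨by omega⟩
  set U : Finset (Fin cc) := Finset.univ.erase 0 with hU
  set D : Finset (Finset (Fin cc)) := U.powerset.erase U with hDdef
  set fS : Finset (Fin cc) → Set (Fin (cc * (cc + 1) / 2)) :=
    fun Bs => SepS cc e (insert (0 : Fin cc) Bs) with hfS
  have hDprop : ∀ Bs ∈ D, Bs ⊆ U ∧ Bs ≠ U := by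
    intro Bs hBs
    rw [hDdef, Finset.mem_erase, Finset.mem_powerset] at hBs
    exact ⟨hBs.2, hBs.1⟩
  have h0mem : ∀ Bs : Finset (Fin cc), (0 : Fin cc) ∈ insert (0 : Fin cc) Bs :=
    fun Bs => Finset.mem_insert_self _ _
  have hinj : Set.InjOn fS D := by
    intro B1 hB1 B2 hB2 heq
    have h01 : (0 : Fin cc) ∉ B1 := fun h =>
      (Finset.notMem_erase 0 Finset.univ) ((hDprop B1 hB1).1 h)
    have h02 : (0 : Fin cc) ∉ B2 := fun h =>
      (Finset.notMem_erase 0 Finset.univ) ((hDprop B2 hB2).1 h)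
    have hA : insert (0 : Fin cc) B1 = insert (0 : Fin cc) B2 := by
      ext a
      rw [sep_recover cc e _ (h0mem B1) a, sep_recover cc e _ (h0mem B2) a]
      have heq' : SepS cc e (insert (0 : Fin cc) B1) = SepS cc e (insert (0 : Fin cc) B2) := heq
      rw [heq']
    calc B1 = (insert (0 : Fin cc) B1).erase 0 := (Finset.erase_insert h01).symm
      _ = (insert (0 : Fin cc) B2).erase 0 := by rw [hA]
      _ = B2 := Finset.erase_insert h02
  have hsub : ↑(D.image fS) ⊆ {S : Set (Fin (cc * (cc + 1) / 2)) | IsMinSep (gr cc e) S} := by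
    intro S hS
    rw [Finset.coe_image] at hS
    obtain ⟨Bs, hBs, rfl⟩ := hS
    obtain ⟨hBsU, hBsne⟩ := hDprop Bs hBs
    refine isMinSep_sep cc e _ ⟨0, h0mem Bs⟩ ?_
    by_contra h
    push_neg at h
    apply hBsne
    apply Finset.Subset.antisymm hBsU
    intro t ht
    rcases Finset.mem_insert.mp (h t) with rfl | h'
    · exact absurd ht (Finset.notMem_erase 0 Finset.univ)
    · exact h'
  have hDcard : D.card = 2 ^ (cc - 1) - 1 := by
    rw [hDdef, Finset.card_erase_of_mem (Finset.mem_powerset_self U), Finset.card_powerset,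
      hU, Finset.card_erase_of_mem (Finset.mem_univ 0), Finset.card_univ, Fintype.card_fin]
  calc 2 ^ (cc - 1) - 1 = D.card := hDcard.symm
    _ = (D.image fS).card := (Finset.card_image_of_injOn hinj).symm
    _ = (↑(D.image fS) : Set (Set (Fin (cc * (cc + 1) / 2)))).ncard :=
        (Set.ncard_coe_finset _).symm
    _ ≤ _ := Set.ncard_le_ncard hsub (Set.toFinite _)

/-- the crossing set of a partition. -/
def OmP (P : Finpartition (Finset.univ : Finset (Fin cc))) : Set (Fin (cc * (cc + 1) / 2)) :=
  {x | ∃ s ∈ e x, ∃ t ∈ e x, ¬∃ p ∈ P.parts, s ∈ p ∧ t ∈ p}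

lemma mem_OmP_iff (P : Finpartition (Finset.univ : Finset (Fin cc))) {s t : Fin cc} :
    e.symm s(s, t) ∈ OmP cc e P ↔ ¬∃ p ∈ P.parts, s ∈ p ∧ t ∈ p := by
  have he : e (e.symm s(s, t)) = s(s, t) := e.apply_symm_apply _
  constructor
  · rintro ⟨s', hs', t', ht', hno⟩ ⟨p, hp, hsp, htp⟩
    rw [he] at hs' ht'
    refine hno ⟨p, hp, ?_, ?_⟩
    · rcases Sym2.mem_iff.mp hs' with rfl | rfl
      exacts [hsp, htp]
    · rcases Sym2.mem_iff.mp ht' with rfl | rfl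
      exacts [hsp, htp]
  · intro h
    refine ⟨s, ?_, t, ?_, h⟩
    · rw [he]; exact Sym2.mem_iff.mpr (Or.inl rfl)
    · rw [he]; exact Sym2.mem_iff.mpr (Or.inr rfl)

lemma OmP_inj (P Q : Finpartition (Finset.univ : Finset (Fin cc)))
    (h : OmP cc e P = OmP cc e Q) : P = Q := by
  have hrel : ∀ s t : Fin cc,
      (∃ p ∈ P.parts, s ∈ p ∧ t ∈ p) ↔ ∃ p ∈ Q.parts, s ∈ p ∧ t ∈ p := by
    intro s t
    have h1 := mem_OmP_iff cc e P (s := s) (t := t)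
    have h2 := mem_OmP_iff cc e Q (s := s) (t := t)
    rw [h] at h1
    rw [← not_iff_not]
    rw [← h1, ← h2]
  have step : ∀ (R S : Finpartition (Finset.univ : Finset (Fin cc))),
      (∀ s t : Fin cc, (∃ p ∈ R.parts, s ∈ p ∧ t ∈ p) ↔ ∃ p ∈ S.parts, s ∈ p ∧ t ∈ p) →
      R.parts ⊆ S.parts := by
    intro R S hRS p hp
    obtain ⟨s0, hs0⟩ := R.nonempty_of_mem_parts hp
    obtain ⟨q, hq, hs0q⟩ := S.exists_mem (Finset.mem_univ s0)
    have hpq : p = q := by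
      ext t
      constructor
      · intro ht
        obtain ⟨q', hq', hs0q', htq'⟩ := (hRS s0 t).mp ⟨p, hp, hs0, ht⟩
        rw [S.eq_of_mem_parts hq hq' hs0q hs0q']
        exact htq'
      · intro ht
        obtain ⟨p', hp', hs0p', htp'⟩ := (hRS s0 t).mpr ⟨q, hq, hs0q, ht⟩
        rw [R.eq_of_mem_parts hp hp' hs0 hs0p']
        exact htp'
    rw [hpq]; exact hq
  have hrel' : ∀ s t : Fin cc,
      (∃ p ∈ Q.parts, s ∈ p ∧ t ∈ p) ↔ ∃ p ∈ P.parts, s ∈ p ∧ t ∈ p :=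
    fun s t => (hrel s t).symm
  exact Finpartition.ext (Finset.Subset.antisymm (step P Q hrel) (step Q P hrel'))

lemma isPMC_OmP (P : Finpartition (Finset.univ : Finset (Fin cc)))
    (h3 : P.parts.card = 3) : IsPMC (gr cc e) (OmP cc e P) := by
  obtain ⟨A, B, C, hab, hac, hbc, hparts⟩ := Finset.card_eq_three.mp h3
  have hAmem : A ∈ P.parts := by rw [hparts]; simp
  have hBmem : B ∈ P.parts := by rw [hparts]; simp
  have hCmem : C ∈ P.parts := by rw [hparts]; simp
  have hpd := P.supIndep.pairwiseDisjoint
  have hAB : Disjoint A B := hpd hAmem hBmem hab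
  have hAC : Disjoint A C := hpd hAmem hCmem hac
  have hBC : Disjoint B C := hpd hBmem hCmem hbc
  have hA : A.Nonempty := P.nonempty_of_mem_parts hAmem
  have hB : B.Nonempty := P.nonempty_of_mem_parts hBmem
  have hC : C.Nonempty := P.nonempty_of_mem_parts hCmem
  have hcov : ∀ x : Fin cc, x ∈ A ∨ x ∈ B ∨ x ∈ C := by
    intro x
    obtain ⟨p, hp, hxp⟩ := P.exists_mem (Finset.mem_univ x)
    rw [hparts] at hp
    rcases Finset.mem_insert.mp hp with rfl | hp
    · exact Or.inl hxp
    rcases Finset.mem_insert.mp hp with rfl | hp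
    · exact Or.inr (Or.inl hxp)
    · rw [Finset.mem_singleton.mp hp] at hxp
      exact Or.inr (Or.inr hxp)
  have hsame : ∀ s t : Fin cc,
      (∃ p ∈ P.parts, s ∈ p ∧ t ∈ p) ↔ pt cc A B C s = pt cc A B C t := by
    intro s t
    constructor
    · rintro ⟨p, hp, hsp, htp⟩
      rw [hparts] at hp
      rcases Finset.mem_insert.mp hp with rfl | hp
      · rw [pt_eq_A hsp, pt_eq_A htp]
      rcases Finset.mem_insert.mp hp with rfl | hp
      · rw [pt_eq_B hAB hsp, pt_eq_B hAB htp]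
      · rw [Finset.mem_singleton.mp hp] at hsp htp
        rw [pt_eq_C hAC hBC hsp, pt_eq_C hAC hBC htp]
    · intro hst
      refine ⟨pt cc A B C s, ?_, mem_pt hcov s, ?_⟩
      · rw [hparts]
        rcases pt_cases (A := A) (B := B) (C := C) s with hs | hs | hs <;> rw [hs] <;> simp
      · rw [hst]; exact mem_pt hcov t
  have hOm : OmP cc e P = OmS cc e A B C := by
    ext x
    constructor
    · rintro ⟨s, hs, t, ht, hno⟩
      exact ⟨s, hs, t, ht, fun hh => hno ((hsame s t).mpr hh)⟩
    · rintro ⟨s, hs, t, ht, hno⟩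
      exact ⟨s, hs, t, ht, fun hh => hno ((hsame s t).mp hh)⟩
  rw [hOm]
  exact isPMC_om hAB hAC hBC hcov hA hB hC

lemma pmc_count :
    Nat.card {P : Finpartition (Finset.univ : Finset (Fin cc)) // P.parts.card = 3} ≤
      {Ω : Set (Fin (cc * (cc + 1) / 2)) | IsPMC (gr cc e) Ω}.ncard := by
  set F : {P : Finpartition (Finset.univ : Finset (Fin cc)) // P.parts.card = 3} →
      {Ω : Set (Fin (cc * (cc + 1) / 2)) | IsPMC (gr cc e) Ω} :=
    fun P => ⟨OmP cc e P.val, isPMC_OmP cc e P.val P.property⟩ with hF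
  have hFinj : Function.Injective F := by
    intro P Q h
    apply Subtype.ext
    exact OmP_inj cc e P.val Q.val (congrArg Subtype.val h)
  calc Nat.card {P : Finpartition (Finset.univ : Finset (Fin cc)) // P.parts.card = 3}
      ≤ Nat.card {Ω : Set (Fin (cc * (cc + 1) / 2)) | IsPMC (gr cc e) Ω} :=
        Nat.card_le_card_of_injective F hFinj
    _ = _ := Nat.card_coe_set_eq _

end Counting

/-- For every `cc ≥ 1` there is a graph on exactly `cc (cc + 1) / 2`
vertices with an edge clique cover of size `cc`, at least `2 ^ (cc - 1) - 1` minimal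
separators, and at least `S(cc, 3)` potential maximal cliques. -/
theorem tightness_example (cc : ℕ) (hcc : 1 ≤ cc) :
    ∃ (G : SimpleGraph (Fin (cc * (cc + 1) / 2))) (W : Finset (Set (Fin (cc * (cc + 1) / 2)))),
      IsECC G W ∧ W.card = cc ∧
      2 ^ (cc - 1) - 1 ≤ {S : Set (Fin (cc * (cc + 1) / 2)) | IsMinSep G S}.ncard ∧
      Nat.card {P : Finpartition (Finset.univ : Finset (Fin cc)) // P.parts.card = 3} ≤
        {Ω : Set (Fin (cc * (cc + 1) / 2)) | IsPMC G Ω}.ncard := by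
  haveI : NeZero cc := ⟨by omega⟩
  have hcard : Fintype.card (Fin (cc * (cc + 1) / 2)) = Fintype.card (Sym2 (Fin cc)) := by
    rw [Fintype.card_fin, Sym2.card, Fintype.card_fin, Nat.choose_two_right,
      Nat.add_sub_cancel, Nat.mul_comm]
  set e := Fintype.equivOfCardEq hcard with he
  exact ⟨gr cc e, Wecc cc e, ecc_gr cc e, Wecc_card cc e, minsep_count cc e hcc,
    pmc_count cc e⟩

end PaperECC
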